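/- arXiv:math/0308056 — 3 statements merged into one kernel-verified Lean document; each statement's English description precedes it below -/
import Mathlib

section
/- Let ⊙ : S₁ × S₂ → S₃ be a right tensorial coupling with right mapping functor H : S₂^op × S₃ → S₁, and assume S₃ is cocomplete. Let A be a small category. Define the tensor product over A of X ∈ S₁^(A^op) and Y ∈ S₂^A as the coequalizer X ⊗_A Y := coeq( ∐_{α : b → b' in A} X(b') ⊙ Y(b) ⇉ ∐_{a ∈ A} X(a) ⊙ Y(a) ), where on the summand indexed by α one map is induced by X(α) ⊙ Y(b) and the other by X(b') ⊙ Y(α). Then ⊗_A is a right tensorial coupling S₁^(A^op) × S₂^A → S₃: there are bijections mor_{S₃}(X ⊗_A Y, z) ≅ mor_{S₁^(A^op)}(X, H(Y(−), z)), natural in X, Y, z. -/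
open CategoryTheory CategoryTheory.Limits Opposite

section Tensor

universe w v₁ v₂ v₃ u₁ u₂ u₃

variable {S₁ : Type u₁} {S₂ : Type u₂} {S₃ : Type u₃}
  [Category.{v₁} S₁] [Category.{v₂} S₂] [Category.{v₃} S₃]
  {A : Type w} [SmallCategory A] [HasColimitsOfSize.{w, w} S₃]

/-- The codomain of the coequalizer diagram defining the tensor product over `A`:
the coproduct `∐_{a ∈ A} X(a) ⊙ Y(a)`. -/
noncomputable def tensorR (F : S₁ ⥤ S₂ ⥤ S₃) (X : Aᵒᵖ ⥤ S₁) (Y : A ⥤ S₂) : S₃ :=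
  ∐ (fun (a : A) => (F.obj (X.obj (op a))).obj (Y.obj a))

/-- The first structural map `∐_{α : b → b'} X(b') ⊙ Y(b) ⟶ ∐_a X(a) ⊙ Y(a)`,
induced on the summand indexed by `α : b ⟶ b'` by `X(α) ⊙ Y(b)`. -/
noncomputable def tensorLeftMap (F : S₁ ⥤ S₂ ⥤ S₃) (X : Aᵒᵖ ⥤ S₁) (Y : A ⥤ S₂) :
    (∐ (fun (p : Σ (b b' : A), b ⟶ b') => (F.obj (X.obj (op p.2.1))).obj (Y.obj p.1))) ⟶
      tensorR F X Y :=
  Sigma.desc (fun p => (F.map (X.map p.2.2.op)).app (Y.obj p.1) ≫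
    Sigma.ι (fun (a : A) => (F.obj (X.obj (op a))).obj (Y.obj a)) p.1)

/-- The second structural map, induced on the summand indexed by `α : b ⟶ b'`
by `X(b') ⊙ Y(α)`. -/
noncomputable def tensorRightMap (F : S₁ ⥤ S₂ ⥤ S₃) (X : Aᵒᵖ ⥤ S₁) (Y : A ⥤ S₂) :
    (∐ (fun (p : Σ (b b' : A), b ⟶ b') => (F.obj (X.obj (op p.2.1))).obj (Y.obj p.1))) ⟶
      tensorR F X Y :=
  Sigma.desc (fun p => (F.obj (X.obj (op p.2.1))).map (Y.map p.2.2) ≫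
    Sigma.ι (fun (a : A) => (F.obj (X.obj (op a))).obj (Y.obj a)) p.2.1)

/-- The tensor product over `A` associated to the coupling `F`:
`X ⊗_A Y = coeq( ∐_{α : b → b'} X(b') ⊙ Y(b) ⇉ ∐_a X(a) ⊙ Y(a) )`. -/
noncomputable def tensorObj (F : S₁ ⥤ S₂ ⥤ S₃) (X : Aᵒᵖ ⥤ S₁) (Y : A ⥤ S₂) : S₃ :=
  coequalizer (tensorLeftMap F X Y) (tensorRightMap F X Y)

/-- The canonical projection `∐_a X(a) ⊙ Y(a) ⟶ X ⊗_A Y`. -/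
noncomputable def tensorπ (F : S₁ ⥤ S₂ ⥤ S₃) (X : Aᵒᵖ ⥤ S₁) (Y : A ⥤ S₂) :
    tensorR F X Y ⟶ tensorObj F X Y :=
  coequalizer.π _ _

/-- The coequalizer relation, restricted to the summand indexed by `α : b ⟶ b'`. -/
theorem tensor_key (F : S₁ ⥤ S₂ ⥤ S₃) (X : Aᵒᵖ ⥤ S₁) (Y : A ⥤ S₂) {b b' : A} (α : b ⟶ b') :
    (F.map (X.map α.op)).app (Y.obj b) ≫
        Sigma.ι (fun (a : A) => (F.obj (X.obj (op a))).obj (Y.obj a)) b ≫ tensorπ F X Y =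
      (F.obj (X.obj (op b'))).map (Y.map α) ≫
        Sigma.ι (fun (a : A) => (F.obj (X.obj (op a))).obj (Y.obj a)) b' ≫ tensorπ F X Y := by
  have h := Sigma.ι (fun (p : Σ (b b' : A), b ⟶ b') =>
      (F.obj (X.obj (op p.2.1))).obj (Y.obj p.1)) ⟨b, b', α⟩ ≫=
    coequalizer.condition (tensorLeftMap F X Y) (tensorRightMap F X Y)
  simp only [tensorLeftMap, tensorRightMap, tensorR] at h
  erw [colimit.ι_desc_assoc, colimit.ι_desc_assoc] at h
  simp only [Category.assoc, Cofan.mk_ι_app, Discrete.functor_obj_eq_as] at h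
  exact h

end Tensor

/-- If `⊙ : S₁ × S₂ → S₃` (curried as `F`) is a right tensorial coupling with right
mapping functor `H`, and `S₃` is cocomplete, then for every small category `A` the
tensor product over `A` is again a right tensorial coupling: there are bijections
`mor_{S₃}(X ⊗_A Y, z) ≅ mor_{S₁^{Aᵒᵖ}}(X, H(Y(−), z))` natural in `X`, `Y` and `z`
(naturality in `X` and `Y` being expressed via the induced maps of coequalizers,
characterized by their compatibility with the canonical projections). -/
theorem stmt5 {S₁ : Type u₁} {S₂ : Type u₂} {S₃ : Type u₃}
    [Category.{v₁} S₁] [Category.{v₂} S₂] [Category.{v₃} S₃]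
    {A : Type w} [SmallCategory A] [HasColimitsOfSize.{w, w} S₃]
    (F : S₁ ⥤ S₂ ⥤ S₃) (H : S₂ᵒᵖ ⥤ S₃ ⥤ S₁)
    (e : ∀ (x : S₁) (y : S₂) (z : S₃), ((F.obj x).obj y ⟶ z) ≃ (x ⟶ (H.obj (op y)).obj z))
    (e_nat_x : ∀ {x x' : S₁} {y : S₂} {z : S₃} (f : x' ⟶ x) (k : (F.obj x).obj y ⟶ z),
      e x' y z ((F.map f).app y ≫ k) = f ≫ e x y z k)
    (e_nat_y : ∀ {x : S₁} {y y' : S₂} {z : S₃} (g : y' ⟶ y) (k : (F.obj x).obj y ⟶ z),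
      e x y' z ((F.obj x).map g ≫ k) = e x y z k ≫ (H.map g.op).app z)
    (e_nat_z : ∀ {x : S₁} {y : S₂} {z z' : S₃} (h : z ⟶ z') (k : (F.obj x).obj y ⟶ z),
      e x y z' (k ≫ h) = e x y z k ≫ (H.obj (op y)).map h) :
    ∃ E : ∀ (X : Aᵒᵖ ⥤ S₁) (Y : A ⥤ S₂) (z : S₃),
        (tensorObj F X Y ⟶ z) ≃ (X ⟶ (Y.op ⋙ H.flip.obj z)),
      (∀ (X : Aᵒᵖ ⥤ S₁) (Y : A ⥤ S₂) {z z' : S₃} (h : z ⟶ z') (φ : tensorObj F X Y ⟶ z),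
        E X Y z' (φ ≫ h) = E X Y z φ ≫ Functor.whiskerLeft Y.op (H.flip.map h)) ∧
      (∀ {X X' : Aᵒᵖ ⥤ S₁} (Y : A ⥤ S₂) {z : S₃} (ξ : X ⟶ X')
          (t : tensorObj F X Y ⟶ tensorObj F X' Y),
        tensorπ F X Y ≫ t =
            Limits.Sigma.map (fun a => (F.map (ξ.app (op a))).app (Y.obj a)) ≫ tensorπ F X' Y →
          ∀ φ : tensorObj F X' Y ⟶ z, E X Y z (t ≫ φ) = ξ ≫ E X' Y z φ) ∧
      (∀ (X : Aᵒᵖ ⥤ S₁) {Y Y' : A ⥤ S₂} {z : S₃} (η : Y ⟶ Y')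
          (t : tensorObj F X Y ⟶ tensorObj F X Y'),
        tensorπ F X Y ≫ t =
            Limits.Sigma.map (fun a => (F.obj (X.obj (op a))).map (η.app a)) ≫ tensorπ F X Y' →
          ∀ φ : tensorObj F X Y' ⟶ z,
            E X Y z (t ≫ φ) = E X Y' z φ ≫ Functor.whiskerRight (NatTrans.op η) (H.flip.obj z)) := by
  refine ⟨fun X Y z =>
    { toFun := fun φ =>
        { app := fun a => e (X.obj a) (Y.obj a.unop) z
            (Sigma.ι (fun (a : A) => (F.obj (X.obj (op a))).obj (Y.obj a)) a.unop ≫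
              tensorπ F X Y ≫ φ)
          naturality := by
            rintro ⟨b'⟩ ⟨b⟩ f
            obtain ⟨α⟩ := f
            dsimp
            rw [← e_nat_x, ← e_nat_y]
            congr 1
            have h := tensor_key F X Y α =≫ φ
            simp only [Category.assoc] at h
            erw [Category.assoc (Sigma.ι (fun (a : A) => (F.obj (X.obj (op a))).obj (Y.obj a)) b)
              (tensorπ F X Y) φ,
              Category.assoc (Sigma.ι (fun (a : A) => (F.obj (X.obj (op a))).obj (Y.obj a)) b')
              (tensorπ F X Y) φ] at h
            exact h }
      invFun := fun ψ => coequalizer.desc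
        (Sigma.desc fun a => (e (X.obj (op a)) (Y.obj a) z).symm (ψ.app (op a)))
        (by
          apply colimit.hom_ext
          rintro ⟨⟨b, b', α⟩⟩
          apply (e (X.obj (op b')) (Y.obj b) z).injective
          simp only [tensorLeftMap, tensorRightMap, colimit.ι_desc_assoc,
            Cofan.mk_pt, Cofan.mk_ι_app, Category.assoc, colimit.ι_desc, tensorR]
          rw [e_nat_x, e_nat_y, Equiv.apply_symm_apply, Equiv.apply_symm_apply]
          exact ψ.naturality α.op)
      left_inv := by
        intro φ
        apply coequalizer.hom_ext
        apply colimit.hom_ext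
        rintro ⟨a⟩
        simp [tensorπ, tensorR]
        erw [coequalizer.π_desc, colimit.ι_desc]
        rfl
      right_inv := by
        intro ψ
        ext a
        dsimp
        erw [coequalizer.π_desc, colimit.ι_desc]
        exact (e _ _ _).apply_symm_apply _ },
    ?_, ?_, ?_⟩
  · intro X Y z z' h φ
    ext a
    refine (congrArg (e _ _ z') ?_).trans (e_nat_z h _)
    simp only [Category.assoc]
    erw [Category.assoc]
  · intro X X' Y z ξ t ht φ
    ext a
    refine (congrArg (e _ _ z) ?_).trans (e_nat_x (ξ.app a) _)
    erw [reassoc_of% ht, Category.assoc, Sigma.ι_map_assoc]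
  · intro X Y Y' z η t ht φ
    ext a
    refine (congrArg (e _ _ z) ?_).trans (e_nat_y (η.app a.unop) _)
    erw [reassoc_of% ht, Category.assoc, Sigma.ι_map_assoc]
end

section
/- Let D be a subcategory of a small category C, and fix objects d of D and c of C. Let (d ↘ D ↘ c) denote the double-comma category whose objects are composable pairs (α : d → d₀ in D, β : d₀ → c in C) with d₀ in D, and whose morphisms (α, d₀, β) → (α', d₀', β') are morphisms γ : d₀ → d₀' in D with γ ∘ α = α' and β' ∘ γ = β. Let π : (d ↘ D ↘ c) → mor_C(d, c) (the discrete category on the hom-set) be the composition functor (α, d₀, β) ↦ β ∘ α, and let ι : mor_C(d, c) → (d ↘ D ↘ c) be the functor γ ↦ (id_d, d, γ). Then π ∘ ι = id, and there is a natural transformation ν : ι ∘ π ⟶ id; in fact ι is left adjoint to π. -/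
open CategoryTheory Opposite

variable {D C : Type u} [SmallCategory D] [SmallCategory C]

/-- The double-comma category `(d ↘ D ↘ c)` of composable pairs
`(α : d → d₀ in D, β : ι d₀ → c in C)`, for a subcategory `ι : D ⥤ C`. -/
abbrev DblComma (ι : D ⥤ C) (d : D) (c : C) : Type u :=
  CostructuredArrow (Under.forget d ⋙ ι) c

/-- The composition functor `π : (d ↘ D ↘ c) ⟶ mor_C(ι d, c)` (the latter viewed as a
discrete category), `(α, d₀, β) ↦ β ∘ α`. -/
def dcPi (ι : D ⥤ C) (d : D) (c : C) : DblComma ι d c ⥤ Discrete (ι.obj d ⟶ c) where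
  obj X := Discrete.mk (ι.map X.left.hom ≫ X.hom)
  map {X Y} f := Discrete.eqToHom (by
    show ι.map X.left.hom ≫ X.hom = ι.map Y.left.hom ≫ Y.hom
    rw [← CostructuredArrow.w f]
    dsimp
    simp only [← Under.w f.left, Functor.map_comp]
    exact (Category.assoc _ _ _).symm)

/-- The functor `ι : mor_C(ι d, c) ⟶ (d ↘ D ↘ c)`, `γ ↦ (id_d, d, γ)`. -/
def dcIota (ι : D ⥤ C) (d : D) (c : C) : Discrete (ι.obj d ⟶ c) ⥤ DblComma ι d c :=
  Discrete.functor (fun γ =>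
    CostructuredArrow.mk (Y := Under.mk (𝟙 d)) (show ι.obj d ⟶ c from γ))

/-- Morphisms out of an object in the image of `dcIota` are unique. -/
theorem dc_hom_subsingleton (ι : D ⥤ C) (d : D) (c : C) (γ : Discrete (ι.obj d ⟶ c))
    (X : DblComma ι d c) : Subsingleton ((dcIota ι d c).obj γ ⟶ X) := by
  constructor
  intro f g
  apply CostructuredArrow.hom_ext
  apply Under.UnderMorphism.ext
  have hf := Under.w f.left
  have hg := Under.w g.left
  simp only [dcIota, Discrete.functor_obj_eq_as, CostructuredArrow.mk_left,
    Under.mk_hom] at hf hg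
  have hf' : f.left.right = X.left.hom := by exact (Category.id_comp _).symm.trans (Under.w f.left)
  have hg' : g.left.right = X.left.hom := by exact (Category.id_comp _).symm.trans (Under.w g.left)
  rw [hf', hg']

/-- The counit `ν : ι ∘ π ⟶ id`. -/
def dcCounit (ι : D ⥤ C) (d : D) (c : C) :
    (dcPi ι d c ⋙ dcIota ι d c) ⟶ 𝟭 (DblComma ι d c) where
  app X := CostructuredArrow.homMk (Under.homMk X.left.hom (by simp [dcIota, dcPi]; exact Category.id_comp _))
    (by simp [dcPi, dcIota]; rfl)
  naturality X Y f :=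
    (dc_hom_subsingleton ι d c ((dcPi ι d c).obj X) Y).elim _ _

theorem dcEq (ι : D ⥤ C) (d : D) (c : C) :
    dcIota ι d c ⋙ dcPi ι d c = 𝟭 (Discrete (ι.obj d ⟶ c)) := by
  refine CategoryTheory.Functor.ext (fun γ => ?_) (fun X Y f => Subsingleton.elim _ _)
  obtain ⟨γ⟩ := γ
  simp [dcIota, dcPi]
  change ι.map (𝟙 d) ≫ γ = γ
  simp

/-- `π ∘ ι = id`, there is a natural transformation `ι ∘ π ⟶ id`, and in fact `ι` is
left adjoint to `π`. -/
theorem stmt12 (ι : D ⥤ C) [ι.Faithful] (d : D) (c : C) :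
    dcIota ι d c ⋙ dcPi ι d c = 𝟭 (Discrete (ι.obj d ⟶ c)) ∧
      Nonempty ((dcPi ι d c ⋙ dcIota ι d c) ⟶ 𝟭 (DblComma ι d c)) ∧
      Nonempty (dcIota ι d c ⊣ dcPi ι d c) := by
  refine ⟨dcEq ι d c, ⟨dcCounit ι d c⟩, ⟨?_⟩⟩
  refine Adjunction.mkOfUnitCounit
    { unit := eqToHom (dcEq ι d c).symm
      counit := dcCounit ι d c
      left_triangle := ?_
      right_triangle := ?_ }
  · apply NatTrans.ext
    funext X
    exact (dc_hom_subsingleton ι d c X ((dcIota ι d c).obj X)).elim _ _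
  · apply Subsingleton.elim
end

section
/- Let C be a small category. Then the colimit, taken over c ∈ C, of the functors c ↦ N(c' ↘ C ↘ c) (the nerve of the double-comma category, functorial in c) is naturally isomorphic, as a functor of c' ∈ C^op, to N(c' ↘ C), the nerve of the under-category of objects under c'. -/
open CategoryTheory CategoryTheory.Limits

universe u

namespace Stmt14Aux

variable {D C : Type u} [SmallCategory D] [SmallCategory C] (F : D ⥤ C)

lemma obj_ext {c : C} {X Y : CostructuredArrow F c}
    (h₁ : X.left = Y.left)
    (h₂ : X.hom = eqToHom (congrArg F.obj h₁) ≫ Y.hom) : X = Y := by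
  obtain ⟨xl, ⟨⟨⟩⟩, xh⟩ := X
  obtain ⟨yl, ⟨⟨⟩⟩, yh⟩ := Y
  change xl = yl at h₁
  subst h₁
  simp only [eqToHom_refl, Category.id_comp] at h₂
  subst h₂
  rfl

/-- Lift a chain `x` in `D` to a chain in the costructured arrow category over
`F.obj (x.obj (Fin.last n))`. -/
def lift {n : ℕ} (x : ComposableArrows D n) :
    ComposableArrows (CostructuredArrow F (F.obj (x.obj (Fin.last n)))) n where
  obj i := CostructuredArrow.mk (F.map (x.map (homOfLE (Fin.le_last i))))
  map {i j} g := CostructuredArrow.homMk (x.map g) (by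
    dsimp
    rw [← F.map_comp, ← x.map_comp]
    exact congrArg _ (congrArg _ (Subsingleton.elim _ _)))
  map_id i := by apply CostructuredArrow.hom_ext; simp
  map_comp {i j k} g h := by apply CostructuredArrow.hom_ext; simp

abbrev K : C ⥤ SSet.{u} := CostructuredArrow.functor F ⋙ nerveFunctor

/-- The cocone on `c ↦ nerve (CostructuredArrow F c)` with apex `nerve D`. -/
def cocone : Cocone (K F) where
  pt := nerve D
  ι :=
    { app := fun c => nerveFunctor.map (X := Cat.of (CostructuredArrow F c)) (Y := Cat.of D)
        (CostructuredArrow.proj F c).toCatHom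
      naturality := fun c c'' f => by
        apply NatTrans.ext
        funext Δ
        ext y
        rfl }

lemma lift_whisker {m n : ℕ} (Φ : Fin (m + 1) ⥤ Fin (n + 1)) (x : ComposableArrows D n) :
    lift F (x.whiskerLeft Φ) ⋙
        CostructuredArrow.map (F.map (x.map (homOfLE (Fin.le_last (Φ.obj (Fin.last m)))))) =
      (lift F x).whiskerLeft Φ := by
  apply CategoryTheory.Functor.ext
  · intro i j g
    apply CostructuredArrow.hom_ext
    simp [lift, CostructuredArrow.map, Comma.mapRight, ComposableArrows.whiskerLeft,
      CostructuredArrow.eqToHom_left, Comma.eqToHom_left]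
    erw [CostructuredArrow.eqToHom_left, CostructuredArrow.eqToHom_left]
    simp
    rfl
  · intro i
    refine obj_ext F rfl ?_
    dsimp [lift, CostructuredArrow.map, Comma.mapRight, ComposableArrows.whiskerLeft]
    erw [eqToHom_refl, Category.id_comp, ← F.map_comp, ← x.map_comp]
    exact congrArg _ (congrArg _ (Subsingleton.elim _ _))

noncomputable def toColim : nerve D ⟶ colimit (K F) where
  app Δ := TypeCat.ofHom fun x => (colimit.ι (K F) (F.obj (x.obj (Fin.last _)))).app Δ (lift F x)
  naturality Δ Δ' φ := by
    ext x
    dsimp only [TypeCat.Fun.toFun_apply, types_comp_apply, TypeCat.ofHom_apply]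
    have hn := NatTrans.naturality_apply
      (colimit.ι (K F) (F.obj (x.obj (Fin.last _)))) φ (lift F x)
    rw [← hn]
    have hw := types_congr_hom (congr_app (colimit.w (K F)
      (F.map (x.map (homOfLE (Fin.le_last
        ((SimplexCategory.toCat.map φ.unop).toFunctor.obj (Fin.last _))))))) Δ')
      (lift F (((nerve D).map φ) x))
    exact hw.symm.trans
      (congrArg ((colimit.ι (K F) (F.obj (x.obj (Fin.last _)))).app Δ')
        (lift_whisker F _ x))

lemma lift_comp_proj {n : ℕ} {c : C} (y : ComposableArrows (CostructuredArrow F c) n) :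
    lift F (y ⋙ CostructuredArrow.proj F c) ⋙
      CostructuredArrow.map ((y.obj (Fin.last n)).hom) = y := by
  apply CategoryTheory.Functor.ext
  · intro i j g
    apply CostructuredArrow.hom_ext
    simp [lift, CostructuredArrow.map, Comma.mapRight]
    erw [CostructuredArrow.eqToHom_left, CostructuredArrow.eqToHom_left]
    exact ((Category.id_comp (obj := D) _).trans (Category.comp_id _)).symm
  · intro i
    refine obj_ext F rfl ?_
    dsimp [lift, CostructuredArrow.map, Comma.mapRight]
    erw [eqToHom_refl, Category.id_comp]
    exact (CostructuredArrow.w (y.map (homOfLE (Fin.le_last i))))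

lemma lift_proj {n : ℕ} (x : ComposableArrows D n) :
    lift F x ⋙ CostructuredArrow.proj F (F.obj (x.obj (Fin.last n))) = x := by
  apply CategoryTheory.Functor.ext
  · intro i j g
    simp [lift]
    exact ((Category.id_comp _).trans (Category.comp_id _)).symm
  · intro i
    rfl

noncomputable def colimIso : colimit (K F) ≅ nerve D where
  hom := colimit.desc (K F) (cocone F)
  inv := toColim F
  hom_inv_id := by
    apply colimit.hom_ext
    intro c
    erw [colimit.ι_desc_assoc, Category.comp_id]
    apply NatTrans.ext
    funext Δ
    ext y
    have hw := types_congr_hom (congr_app (colimit.w (K F) ((y.obj (Fin.last _)).hom)) Δ)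
      (lift F (y ⋙ CostructuredArrow.proj F c))
    exact hw.symm.trans
      (congrArg ((colimit.ι (K F) c).app Δ) (lift_comp_proj F y))
  inv_hom_id := by
    apply NatTrans.ext
    funext Δ
    ext x
    have hd := types_congr_hom (congr_app
      (colimit.ι_desc (cocone F) (F.obj (x.obj (Fin.last _)))) Δ) (lift F x)
    exact hd.trans (lift_proj F x)

lemma colimIso_hom : (colimIso F).hom = colimit.desc (K F) (cocone F) := rfl

end Stmt14Aux

/-- For a small category `C`, the colimit over `c ∈ C` of the nerves of the
double-comma categories `(c' ↘ C ↘ c)` is isomorphic, naturally in `c' ∈ Cᵒᵖ`, to the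
nerve of the under-category `c' ↘ C`.  Here `(c' ↘ C ↘ c)` is realized as the
costructured arrow category of the forgetful functor `Under c' ⥤ C` over `c`,
functorially in `c`; naturality in `c'` is expressed against the maps of colimits
characterized by their compatibility with the colimit inclusions. -/
theorem stmt14 (C : Type u) [SmallCategory C] :
    ∃ iso : ∀ c' : C,
        colimit (CostructuredArrow.functor (Under.forget c') ⋙ nerveFunctor)
          ≅ nerve (Under c'),
      ∀ {c' c'' : C} (f : c'' ⟶ c')
        (t : colimit (CostructuredArrow.functor (Under.forget c') ⋙ nerveFunctor) ⟶
              colimit (CostructuredArrow.functor (Under.forget c'') ⋙ nerveFunctor)),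
        (∀ c : C,
          colimit.ι (CostructuredArrow.functor (Under.forget c') ⋙ nerveFunctor) c ≫ t =
            nerveFunctor.map
                (X := Cat.of (CostructuredArrow (Under.forget c') c))
                (Y := Cat.of (CostructuredArrow (Under.forget c'') c))
                (Functor.toCatHom (C := CostructuredArrow (Under.forget c') c)
                  (CostructuredArrow.pre (Under.map f) (Under.forget c'') c)) ≫
              colimit.ι (CostructuredArrow.functor (Under.forget c'') ⋙ nerveFunctor) c) →
          t ≫ (iso c'').hom =
            (iso c').hom ≫ nerveFunctor.map
              (X := Cat.of (Under c')) (Y := Cat.of (Under c'')) (Under.map f).toCatHom := by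
  refine ⟨fun c' => Stmt14Aux.colimIso (Under.forget c'), ?_⟩
  intro c' c'' f t h
  apply colimit.hom_ext
  intro c
  rw [Stmt14Aux.colimIso_hom, Stmt14Aux.colimIso_hom]
  erw [← Category.assoc, h c, Category.assoc, colimit.ι_desc, colimit.ι_desc_assoc]
  rfl
end
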